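/- Let R = ℂ[x,y]/(xy). The module of Kähler differentials Ω¹_{R/ℂ} has a torsion submodule τ generated by the elements y·dx and x·dy (equivalently by the class of d(xy)); this torsion submodule is nonzero, is annihilated by the maximal ideal (x,y), and the quotient Ω¹_{R/ℂ}/τ is a torsion-free R-module. -/

import Mathlib

open MvPolynomial

/-- `R = ℂ[x,y]/(xy)`. -/
abbrev Rxy : Type := MvPolynomial (Fin 2) ℂ ⧸
  Ideal.span {(X 0 * X 1 : MvPolynomial (Fin 2) ℂ)}

/-- The class of `x` in `R`. -/
noncomputable def xR : Rxy := Ideal.Quotient.mk _ (X 0)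

/-- The class of `y` in `R`. -/
noncomputable def yR : Rxy := Ideal.Quotient.mk _ (X 1)

set_option maxHeartbeats 1000000
set_option synthInstance.maxHeartbeats 400000

noncomputable def ψ₁ : MvPolynomial (Fin 2) ℂ →ₐ[ℂ] Polynomial ℂ :=
  aeval ![Polynomial.X, 0]
noncomputable def ψ₂ : MvPolynomial (Fin 2) ℂ →ₐ[ℂ] Polynomial ℂ :=
  aeval ![0, Polynomial.X]

lemma ψ₁_rel : ψ₁ (X 0 * X 1) = 0 := by simp [ψ₁]
lemma ψ₂_rel : ψ₂ (X 0 * X 1) = 0 := by simp [ψ₂]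

noncomputable def φ₁ : Rxy →ₐ[ℂ] Polynomial ℂ :=
  Ideal.Quotient.liftₐ _ ψ₁ (by
    intro a ha
    rw [Ideal.mem_span_singleton] at ha
    obtain ⟨c, rfl⟩ := ha
    rw [map_mul, ψ₁_rel, zero_mul])

noncomputable def φ₂ : Rxy →ₐ[ℂ] Polynomial ℂ :=
  Ideal.Quotient.liftₐ _ ψ₂ (by
    intro a ha
    rw [Ideal.mem_span_singleton] at ha
    obtain ⟨c, rfl⟩ := ha
    rw [map_mul, ψ₂_rel, zero_mul])

@[simp] lemma φ₁_mk (p) : φ₁ (Ideal.Quotient.mk _ p) = ψ₁ p := rfl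
@[simp] lemma φ₂_mk (p) : φ₂ (Ideal.Quotient.mk _ p) = ψ₂ p := rfl
@[simp] lemma φ₁_x : φ₁ xR = Polynomial.X := by simp [xR, ψ₁]
@[simp] lemma φ₁_y : φ₁ yR = 0 := by simp [yR, ψ₁]
@[simp] lemma φ₂_x : φ₂ xR = 0 := by simp [xR, ψ₂]
@[simp] lemma φ₂_y : φ₂ yR = Polynomial.X := by simp [yR, ψ₂]

noncomputable def η₁ : Polynomial ℂ →ₐ[ℂ] MvPolynomial (Fin 2) ℂ :=
  Polynomial.aeval (X 0)
noncomputable def η₂ : Polynomial ℂ →ₐ[ℂ] MvPolynomial (Fin 2) ℂ :=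
  Polynomial.aeval (X 1)

lemma sub_eta_mem₁ (p : MvPolynomial (Fin 2) ℂ) :
    p - η₁ (ψ₁ p) ∈ Ideal.span {(X 1 : MvPolynomial (Fin 2) ℂ)} := by
  induction p using MvPolynomial.induction_on with
  | C a => simp [ψ₁, η₁]
  | add p q hp hq =>
      have := Ideal.add_mem _ hp hq
      convert this using 1
      simp only [map_add]; ring
  | mul_X p i hp =>
      fin_cases i
      · show p * X 0 - η₁ (ψ₁ (p * X 0)) ∈ _
        have : p * X 0 - η₁ (ψ₁ (p * X 0)) = (p - η₁ (ψ₁ p)) * X 0 := by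
          simp only [map_mul, ψ₁, η₁]
          simp
          ring
        rw [this]
        exact Ideal.mul_mem_right _ _ hp
      · show p * X 1 - η₁ (ψ₁ (p * X 1)) ∈ _
        have : ψ₁ (p * X 1) = 0 := by simp [ψ₁]
        rw [this]
        simp only [map_zero, sub_zero]
        exact Ideal.mul_mem_left _ _ (Ideal.subset_span rfl)

lemma sub_eta_mem₂ (p : MvPolynomial (Fin 2) ℂ) :
    p - η₂ (ψ₂ p) ∈ Ideal.span {(X 0 : MvPolynomial (Fin 2) ℂ)} := by
  induction p using MvPolynomial.induction_on with
  | C a => simp [ψ₂, η₂]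
  | add p q hp hq =>
      have := Ideal.add_mem _ hp hq
      convert this using 1
      simp only [map_add]; ring
  | mul_X p i hp =>
      fin_cases i
      · show p * X 0 - η₂ (ψ₂ (p * X 0)) ∈ _
        have : ψ₂ (p * X 0) = 0 := by simp [ψ₂]
        rw [this]
        simp only [map_zero, sub_zero]
        exact Ideal.mul_mem_left _ _ (Ideal.subset_span rfl)
      · show p * X 1 - η₂ (ψ₂ (p * X 1)) ∈ _
        have : p * X 1 - η₂ (ψ₂ (p * X 1)) = (p - η₂ (ψ₂ p)) * X 1 := by
          simp only [map_mul, ψ₂, η₂]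
          simp
          ring
        rw [this]
        exact Ideal.mul_mem_right _ _ hp

lemma mem_span_yR {a : Rxy} (h : φ₁ a = 0) : a ∈ Ideal.span {yR} := by
  obtain ⟨p, rfl⟩ := Ideal.Quotient.mk_surjective a
  have h' : ψ₁ p = 0 := h
  have := sub_eta_mem₁ p
  rw [h', map_zero, sub_zero, Ideal.mem_span_singleton] at this
  obtain ⟨c, rfl⟩ := this
  rw [Ideal.mem_span_singleton]
  exact ⟨Ideal.Quotient.mk _ c, by rw [yR, ← map_mul]⟩

lemma mem_span_xR {a : Rxy} (h : φ₂ a = 0) : a ∈ Ideal.span {xR} := by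
  obtain ⟨p, rfl⟩ := Ideal.Quotient.mk_surjective a
  have h' : ψ₂ p = 0 := h
  have := sub_eta_mem₂ p
  rw [h', map_zero, sub_zero, Ideal.mem_span_singleton] at this
  obtain ⟨c, rfl⟩ := this
  rw [Ideal.mem_span_singleton]
  exact ⟨Ideal.Quotient.mk _ c, by rw [xR, ← map_mul]⟩

lemma xy_eq_zero : xR * yR = 0 := by
  rw [xR, yR, ← map_mul, Ideal.Quotient.eq_zero_iff_mem]
  exact Ideal.subset_span rfl

lemma phi_inj {a : Rxy} (h1 : φ₁ a = 0) (h2 : φ₂ a = 0) : a = 0 := by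
  obtain ⟨c, rfl⟩ := Ideal.mem_span_singleton.mp (mem_span_yR h1)
  rw [map_mul, φ₂_y] at h2
  have hc : φ₂ c = 0 := by
    rcases mul_eq_zero.mp h2 with h | h
    · exact absurd h Polynomial.X_ne_zero
    · exact h
  obtain ⟨d, rfl⟩ := Ideal.mem_span_singleton.mp (mem_span_xR hc)
  rw [← mul_assoc, mul_comm yR xR, xy_eq_zero, zero_mul]

lemma xR_ne_zero : xR ≠ 0 := fun h => by
  have := congrArg φ₁ h
  rw [φ₁_x, map_zero] at this
  exact Polynomial.X_ne_zero this

lemma yR_ne_zero : yR ≠ 0 := fun h => by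
  have := congrArg φ₂ h
  rw [φ₂_y, map_zero] at this
  exact Polynomial.X_ne_zero this

lemma reg_phi₁ {r : Rxy} (hr : r ∈ nonZeroDivisors Rxy) : φ₁ r ≠ 0 := by
  intro h
  obtain ⟨c, rfl⟩ := Ideal.mem_span_singleton.mp (mem_span_yR h)
  have : yR * c * xR = 0 := by
    rw [mul_comm yR c, mul_assoc, mul_comm yR xR, xy_eq_zero, mul_zero]
  exact xR_ne_zero (hr.2 xR (by rwa [mul_comm]))

lemma reg_phi₂ {r : Rxy} (hr : r ∈ nonZeroDivisors Rxy) : φ₂ r ≠ 0 := by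
  intro h
  obtain ⟨c, rfl⟩ := Ideal.mem_span_singleton.mp (mem_span_xR h)
  have : xR * c * yR = 0 := by
    rw [mul_comm xR c, mul_assoc, xy_eq_zero, mul_zero]
  exact yR_ne_zero (hr.2 yR (by rwa [mul_comm]))

lemma reg_cancel₁ {r a : Rxy} (hr : r ∈ nonZeroDivisors Rxy)
    (h : r * a ∈ Ideal.span {yR}) : a ∈ Ideal.span {yR} := by
  apply mem_span_yR
  obtain ⟨c, hc⟩ := Ideal.mem_span_singleton.mp h
  have : φ₁ r * φ₁ a = 0 := by
    rw [← map_mul, hc, map_mul, φ₁_y, zero_mul]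
  rcases mul_eq_zero.mp this with h' | h'
  · exact absurd h' (reg_phi₁ hr)
  · exact h'

lemma reg_cancel₂ {r a : Rxy} (hr : r ∈ nonZeroDivisors Rxy)
    (h : r * a ∈ Ideal.span {xR}) : a ∈ Ideal.span {xR} := by
  apply mem_span_xR
  obtain ⟨c, hc⟩ := Ideal.mem_span_singleton.mp h
  have : φ₂ r * φ₂ a = 0 := by
    rw [← map_mul, hc, map_mul, φ₂_x, zero_mul]
  rcases mul_eq_zero.mp this with h' | h'
  · exact absurd h' (reg_phi₂ hr)
  · exact h'

lemma xy_sum_reg : xR + yR ∈ nonZeroDivisors Rxy := by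
  rw [mem_nonZeroDivisors_iff_right]
  intro s hs
  apply phi_inj
  · have : φ₁ s * Polynomial.X = 0 := by
      have := congrArg φ₁ hs
      rw [map_mul, map_add, φ₁_x, φ₁_y, add_zero, map_zero] at this
      exact this
    rcases mul_eq_zero.mp this with h | h
    · exact h
    · exact absurd h Polynomial.X_ne_zero
  · have : φ₂ s * Polynomial.X = 0 := by
      have := congrArg φ₂ hs
      rw [map_mul, map_add, φ₂_x, φ₂_y, zero_add, map_zero] at this
      exact this
    rcases mul_eq_zero.mp this with h | h
    · exact h
    · exact absurd h Polynomial.X_ne_zero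

-- y is not in (y²)
lemma y_not_sq : ∀ d : Rxy, yR ≠ d * (yR * yR) := by
  intro d h
  have := congrArg φ₂ h
  rw [map_mul, map_mul, φ₂_y] at this
  have h2 : Polynomial.X * (1 - φ₂ d * Polynomial.X) = 0 := by
    linear_combination this
  rcases mul_eq_zero.mp h2 with h' | h'
  · exact Polynomial.X_ne_zero h'
  · have : IsUnit (Polynomial.X : Polynomial ℂ) := by
      refine IsUnit.of_mul_eq_one (φ₂ d) ?_
      have := sub_eq_zero.mp h'
      rw [mul_comm] at this
      exact this.symm
    exact Polynomial.not_isUnit_X this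

noncomputable def genVal : Fin 2 → Rxy := fun i => Ideal.Quotient.mk _ (X i)

lemma aeval_genVal : (aeval genVal : MvPolynomial (Fin 2) ℂ →ₐ[ℂ] Rxy)
    = Ideal.Quotient.mkₐ ℂ _ := by
  apply MvPolynomial.algHom_ext
  intro i
  simp [genVal]

noncomputable def gens : Algebra.Generators ℂ Rxy (Fin 2) where
  val := genVal
  σ' s := (Ideal.Quotient.mk_surjective s).choose
  aeval_val_σ' s := by
    rw [show (aeval genVal) _ = Ideal.Quotient.mkₐ ℂ _ _ from
      congrFun (congrArg DFunLike.coe aeval_genVal) _]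
    exact (Ideal.Quotient.mk_surjective s).choose_spec

noncomputable def pres : Algebra.Presentation ℂ Rxy (Fin 2) Unit where
  toGenerators := gens
  relation _ := (X 0 * X 1 : MvPolynomial (Fin 2) ℂ)
  span_range_relation_eq_ker := by
    show Ideal.span (Set.range fun _ : Unit => (X 0 * X 1 : MvPolynomial (Fin 2) ℂ))
      = RingHom.ker (aeval genVal : MvPolynomial (Fin 2) ℂ →ₐ[ℂ] Rxy)
    rw [Set.range_const, aeval_genVal]
    exact (Ideal.mk_ker).symm

open KaehlerDifferential in
noncomputable def sol : (Algebra.Presentation.differentialsRelations pres).Solution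
    (Ω[Rxy⁄ℂ]) :=
  pres.differentialsSolution

lemma sol_isPres : sol.IsPresentation := pres.differentialsSolution_isPresentation

instance : Fintype pres.differentialsRelations.G := inferInstanceAs (Fintype (Fin 2))
instance : Nonempty pres.differentialsRelations.R := inferInstanceAs (Nonempty Unit)
instance : OfNat pres.differentialsRelations.G 0 := inferInstanceAs (OfNat (Fin 2) 0)
instance : OfNat pres.differentialsRelations.G 1 := inferInstanceAs (OfNat (Fin 2) 1)

noncomputable def relv : Fin 2 →₀ Rxy := Finsupp.single 0 yR + Finsupp.single 1 xR

lemma relation_eq (r : Unit) :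
    (Algebra.Presentation.differentialsRelations pres).relation r = relv := by
  ext i
  fin_cases i <;>
    simp [Algebra.Presentation.differentialsRelations, relv, pderiv_mul, pres, gens,
      genVal, xR, yR, Finsupp.single_apply, Finsupp.mapRange_add] <;>
    exact DFunLike.congr_fun (add_comm _ _) _

noncomputable def piΩ : (Fin 2 →₀ Rxy) →ₗ[Rxy] (KaehlerDifferential ℂ Rxy) := sol.π

lemma piΩ_surj : Function.Surjective piΩ := by
  have h := (Module.Relations.Solution.isPresentation_iff _).mp sol_isPres
  rw [← Module.Relations.Solution.surjective_π_iff_span_eq_top] at h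
  exact h.1

lemma ker_piΩ : LinearMap.ker piΩ = Submodule.span Rxy {relv} := by
  have h := (Module.Relations.Solution.isPresentation_iff _).mp sol_isPres
  have : Set.range (Algebra.Presentation.differentialsRelations pres).relation = {relv} := by
    rw [show (Algebra.Presentation.differentialsRelations pres).relation
      = fun _ => relv from funext relation_eq]
    exact Set.range_const
  rw [show LinearMap.ker piΩ = LinearMap.ker sol.π from rfl, h.2, this]
  rfl

lemma piΩ_single0 : piΩ (Finsupp.single 0 1) = KaehlerDifferential.D ℂ Rxy xR :=
  sol.π_single 0

lemma piΩ_single1 : piΩ (Finsupp.single 1 1) = KaehlerDifferential.D ℂ Rxy yR :=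
  sol.π_single 1

lemma piΩ_apply (f : Fin 2 →₀ Rxy) :
    piΩ f = f 0 • KaehlerDifferential.D ℂ Rxy xR + f 1 • KaehlerDifferential.D ℂ Rxy yR := by
  have : f = Finsupp.single 0 (f 0) + Finsupp.single 1 (f 1) := by
    ext i; fin_cases i <;> simp [Finsupp.single_apply]
  conv_lhs => rw [this]
  rw [map_add, ← piΩ_single0, ← piΩ_single1]
  rw [show Finsupp.single (0 : Fin 2) (f 0) = f 0 • Finsupp.single 0 (1:Rxy) by
    rw [Finsupp.smul_single, smul_eq_mul, mul_one]]
  rw [show Finsupp.single (1 : Fin 2) (f 1) = f 1 • Finsupp.single 1 (1:Rxy) by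
    rw [Finsupp.smul_single, smul_eq_mul, mul_one]]
  rw [map_smul, map_smul]

lemma yx_eq_zero : yR * xR = 0 := by rw [mul_comm]; exact xy_eq_zero

noncomputable def dX := KaehlerDifferential.D ℂ Rxy xR
noncomputable def dY := KaehlerDifferential.D ℂ Rxy yR

@[simp] lemma relv_0 : relv 0 = yR := by simp [relv, Finsupp.single_apply]
@[simp] lemma relv_1 : relv 1 = xR := by simp [relv, Finsupp.single_apply]

lemma pi_relv : piΩ relv = 0 := by
  have := sol.π_relation ()
  rwa [relation_eq] at this

lemma pi_single0 (a : Rxy) : piΩ (Finsupp.single 0 a) = a • dX := by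
  rw [piΩ_apply]; simp [Finsupp.single_apply, dX]
  exact zero_smul Rxy (KaehlerDifferential.D ℂ Rxy yR)

lemma pi_single1 (a : Rxy) : piΩ (Finsupp.single 1 a) = a • dY := by
  rw [piΩ_apply]; simp [Finsupp.single_apply, dY]
  exact zero_smul Rxy (KaehlerDifferential.D ℂ Rxy xR)

lemma rel_holds : yR • dX + xR • dY = 0 := by
  have := pi_relv
  rw [piΩ_apply] at this
  simpa [dX, dY] using this

lemma y2_dX : (yR * yR) • dX = 0 := by
  rw [← pi_single0]
  have : Finsupp.single (0 : Fin 2) (yR * yR) = yR • relv := by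
    ext i; fin_cases i <;> simp [relv, Finsupp.single_apply, yx_eq_zero]
  rw [this, map_smul, pi_relv, smul_zero]

lemma x2_dY : (xR * xR) • dY = 0 := by
  rw [← pi_single1]
  have : Finsupp.single (1 : Fin 2) (xR * xR) = xR • relv := by
    ext i; fin_cases i <;> simp [relv, Finsupp.single_apply, xy_eq_zero]
  rw [this, map_smul, pi_relv, smul_zero]

lemma tors_gen1 : (xR + yR) • (yR • dX) = 0 := by
  rw [smul_smul (xR + yR) yR dX, add_mul, xy_eq_zero, zero_add, y2_dX]

lemma tors_gen2 : (xR + yR) • (xR • dY) = 0 := by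
  rw [smul_smul (xR + yR) xR dY, add_mul, mul_comm yR xR, xy_eq_zero, add_zero, x2_dY]

lemma ydX_ne : yR • dX ≠ 0 := by
  intro h
  rw [← pi_single0] at h
  have hk : Finsupp.single (0 : Fin 2) yR ∈ LinearMap.ker piΩ := h
  rw [ker_piΩ, Submodule.mem_span_singleton] at hk
  obtain ⟨c, hc⟩ := hk
  have h1 : c * xR = 0 := by
    have := congrFun (congrArg DFunLike.coe hc) 1
    simpa [Finsupp.single_apply] using this
  have h0 : c * yR = yR := by
    have := congrFun (congrArg DFunLike.coe hc) 0
    simpa [Finsupp.single_apply] using this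
  have hφ : φ₁ c = 0 := by
    have := congrArg φ₁ h1
    rw [map_mul, φ₁_x, map_zero] at this
    rcases mul_eq_zero.mp this with h' | h'
    · exact h'
    · exact absurd h' Polynomial.X_ne_zero
  obtain ⟨d, rfl⟩ := Ideal.mem_span_singleton.mp (mem_span_yR hφ)
  exact y_not_sq d (by linear_combination -h0)

noncomputable def Tsub : Submodule Rxy (KaehlerDifferential ℂ Rxy) :=
  Submodule.span Rxy {yR • dX, xR • dY}

lemma decomp_from_torsion {r : Rxy} (hr : r ∈ nonZeroDivisors Rxy) (f : Fin 2 →₀ Rxy)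
    {c c' : Rxy} (h0 : c * yR = r * f 0) (h1 : c' * xR = r * f 1) :
    piΩ f ∈ Tsub := by
  have hf0 : f 0 ∈ Ideal.span {yR} :=
    reg_cancel₁ hr (Ideal.mem_span_singleton.mpr ⟨c, by linear_combination -h0⟩)
  have hf1 : f 1 ∈ Ideal.span {xR} :=
    reg_cancel₂ hr (Ideal.mem_span_singleton.mpr ⟨c', by linear_combination -h1⟩)
  obtain ⟨a, ha⟩ := Ideal.mem_span_singleton.mp hf0
  obtain ⟨b, hb⟩ := Ideal.mem_span_singleton.mp hf1
  rw [piΩ_apply]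
  apply Submodule.mem_span_pair.mpr
  refine ⟨a, b, ?_⟩
  rw [ha, hb]
  show a • (yR • dX) + b • (xR • dY) = (yR * a) • dX + (xR * b) • dY
  rw [smul_smul a yR dX, smul_smul b xR dY, mul_comm a yR, mul_comm b xR]

lemma torsion_eq : Submodule.torsion Rxy (KaehlerDifferential ℂ Rxy) = Tsub := by
  apply le_antisymm
  · rintro w hw
    obtain ⟨⟨r, hr⟩, hrw⟩ := (Submodule.mem_torsion_iff _).mp hw
    obtain ⟨f, rfl⟩ := piΩ_surj w
    have hker : r • f ∈ LinearMap.ker piΩ := by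
      rw [LinearMap.mem_ker, map_smul]
      exact hrw
    rw [ker_piΩ, Submodule.mem_span_singleton] at hker
    obtain ⟨c, hc⟩ := hker
    have h0 : c * yR = r * f 0 := by
      have := congrFun (congrArg DFunLike.coe hc) 0
      simpa using this
    have h1 : c * xR = r * f 1 := by
      have := congrFun (congrArg DFunLike.coe hc) 1
      simpa using this
    exact decomp_from_torsion hr f h0 h1
  · rw [Tsub, Submodule.span_le]
    rintro z hz
    rcases hz with rfl | rfl
    · exact (Submodule.mem_torsion_iff _).mpr ⟨⟨xR + yR, xy_sum_reg⟩, tors_gen1⟩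
    · exact (Submodule.mem_torsion_iff _).mpr ⟨⟨xR + yR, xy_sum_reg⟩, tors_gen2⟩

lemma torsion_ne_bot : Submodule.torsion Rxy (KaehlerDifferential ℂ Rxy) ≠ ⊥ := by
  intro h
  apply ydX_ne
  have : yR • dX ∈ Submodule.torsion Rxy (KaehlerDifferential ℂ Rxy) :=
    (Submodule.mem_torsion_iff _).mpr ⟨⟨xR + yR, xy_sum_reg⟩, tors_gen1⟩
  rw [h] at this
  exact this

lemma torsion_ann : ∀ w ∈ Submodule.torsion Rxy (KaehlerDifferential ℂ Rxy),
    xR • w = 0 ∧ yR • w = 0 := by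
  intro w hw
  rw [torsion_eq] at hw
  have hle : Tsub ≤ LinearMap.ker (LinearMap.lsmul Rxy (KaehlerDifferential ℂ Rxy) xR)
      ⊓ LinearMap.ker (LinearMap.lsmul Rxy (KaehlerDifferential ℂ Rxy) yR) := by
    rw [Tsub, Submodule.span_le]
    rintro z hz
    rcases hz with rfl | rfl
    · constructor
      · show xR • (yR • dX) = 0
        rw [smul_smul xR yR dX, xy_eq_zero]; exact zero_smul Rxy dX
      · show yR • (yR • dX) = 0
        rw [smul_smul yR yR dX, y2_dX]
    · constructor
      · show xR • (xR • dY) = 0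
        rw [smul_smul xR xR dY, x2_dY]
      · show yR • (xR • dY) = 0
        rw [smul_smul yR xR dY, yx_eq_zero]; exact zero_smul Rxy dY
  exact ⟨(hle hw).1, (hle hw).2⟩

lemma quot_torsion_free : Submodule.torsion Rxy
    ((KaehlerDifferential ℂ Rxy) ⧸
      Submodule.torsion Rxy (KaehlerDifferential ℂ Rxy)) = ⊥ := by
  rw [Submodule.eq_bot_iff]
  intro w hw
  obtain ⟨⟨r, hr⟩, hrw⟩ := (Submodule.mem_torsion_iff _).mp hw
  obtain ⟨ω, rfl⟩ := Submodule.Quotient.mk_surjective _ w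
  rw [show (⟨r, hr⟩ : nonZeroDivisors Rxy) • Submodule.Quotient.mk ω
      = Submodule.Quotient.mk (r • ω) from rfl, Submodule.Quotient.mk_eq_zero] at hrw
  rw [torsion_eq] at hrw
  obtain ⟨c, d, hcd⟩ := Submodule.mem_span_pair.mp (by rw [Tsub] at hrw; exact hrw)
  obtain ⟨f, rfl⟩ := piΩ_surj ω
  -- r • piΩ f = c • (yR • dX) + d • (xR • dY) = piΩ (single 0 (c*yR) + single 1 (d*xR))
  have hker : r • f - (Finsupp.single 0 (c * yR) + Finsupp.single 1 (d * xR))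
      ∈ LinearMap.ker piΩ := by
    rw [LinearMap.mem_ker, map_sub, map_smul, map_add, pi_single0, pi_single1]
    rw [← smul_smul c yR dX, ← smul_smul d xR dY]
    rw [hcd]
    exact sub_self _
  rw [ker_piΩ, Submodule.mem_span_singleton] at hker
  obtain ⟨e, he⟩ := hker
  have h0 : (c + e) * yR = r * f 0 := by
    have := congrFun (congrArg DFunLike.coe he) 0
    simp [Finsupp.single_apply] at this
    linear_combination this
  have h1 : (d + e) * xR = r * f 1 := by
    have := congrFun (congrArg DFunLike.coe he) 1
    simp [Finsupp.single_apply] at this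
    linear_combination this
  rw [Submodule.Quotient.mk_eq_zero, torsion_eq]
  exact decomp_from_torsion hr f h0 h1

/-- The torsion submodule `τ ⊆ Ω¹_{R/ℂ}` is generated by `y·dx` and `x·dy`, is
nonzero, is annihilated by the maximal ideal `(x,y)`, and `Ω¹_{R/ℂ}/τ` is
torsion-free. -/
theorem stmt11 :
    (Submodule.torsion Rxy (KaehlerDifferential ℂ Rxy)
      = Submodule.span Rxy
          {yR • (KaehlerDifferential.D ℂ Rxy) xR,
           xR • (KaehlerDifferential.D ℂ Rxy) yR}) ∧
    Submodule.torsion Rxy (KaehlerDifferential ℂ Rxy) ≠ ⊥ ∧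
    (∀ w ∈ Submodule.torsion Rxy (KaehlerDifferential ℂ Rxy),
      xR • w = 0 ∧ yR • w = 0) ∧
    Submodule.torsion Rxy
        ((KaehlerDifferential ℂ Rxy) ⧸
          Submodule.torsion Rxy (KaehlerDifferential ℂ Rxy)) = ⊥ := by
  refine ⟨?_, torsion_ne_bot, torsion_ann, quot_torsion_free⟩
  rw [torsion_eq, Tsub, dX, dY]
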